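/- Theorem (average TreeExplorer code length). Fix n ≥ 2. For any probability distribution p on the (finite) set of rooted plane trees with n nodes, the expected length of the TreeExplorer code, E[|TE(T)|] = Σ_T p(T)·|TE(T)|, is at most 2n − 2 bits. -/

import Mathlib

/-- A rooted plane tree: a root node together with a finite ordered list of
subtrees, the subtrees rooted at the children of the root. -/
inductive PTree : Type
  | node : List PTree → PTree

namespace PTree

/-- The subtrees rooted at the children of the root. -/
def children : PTree → List PTree
  | node ts => ts

mutual
/-- Number of nodes of a rooted plane tree. -/
def numNodes : PTree → ℕ
  | node ts => 1 + numNodesList ts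
def numNodesList : List PTree → ℕ
  | [] => 0
  | t :: ts => numNodes t + numNodesList ts
end

mutual
/-- Number of leaves (nodes with no children); a single-node tree has one leaf. -/
def numLeaves : PTree → ℕ
  | node [] => 1
  | node (t :: ts) => numLeaves t + numLeavesList ts
def numLeavesList : List PTree → ℕ
  | [] => 0
  | t :: ts => numLeaves t + numLeavesList ts
end

/-- Symbols of the ternary pit-climbing code: ↓, ↑, ⇑. -/
inductive PCSym : Type
  | down   -- ↓ : fall to the leftmost unexplored leaf
  | up     -- ↑ : climb to a never-before-visited node
  | upSeen -- ⇑ : climb to an already-visited node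
deriving DecidableEq

mutual
/-- Ternary pit-climbing code TPC: empty for a single node; `TPC t ++ [↑]` for a
single child subtree `t`; `TPC t₁ ++ [↑,↓] ++ TPC t₂ ++ [⇑,↓] ++ ⋯ ++ [⇑,↓] ++ TPC tₖ ++ [⇑]`
for children subtrees `t₁, …, tₖ`, `k ≥ 2`. -/
def TPC : PTree → List PCSym
  | node [] => []
  | node [t] => TPC t ++ [.up]
  | node (t₁ :: t₂ :: ts) => TPC t₁ ++ [.up, .down] ++ TPCRest (t₂ :: ts)
/-- TPC contribution of the second-onwards children subtrees. -/
def TPCRest : List PTree → List PCSym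
  | [] => []
  | [t] => TPC t ++ [.upSeen]
  | t :: ts => TPC t ++ [.upSeen, .down] ++ TPCRest ts
end

/-- Binary encoding of the pit-climbing symbols: ↓ ↦ 0, ⇑ ↦ 00, ↑ ↦ 1. -/
def pcBits : PCSym → List Bool
  | .down => [false]
  | .upSeen => [false, false]
  | .up => [true]

/-- Binary pit-climbing code PC. -/
def PC (T : PTree) : List Bool := (TPC T).flatMap pcBits

lemma numNodesList_append (a b : List PTree) :
    numNodesList (a ++ b) = numNodesList a + numNodesList b := by
  induction a with
  | nil => simp [numNodesList]
  | cons t ts ih => simp [numNodesList, ih]; ring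

lemma numNodesList_children_flatten (l : List PTree) :
    numNodesList ((l.map children).flatten) + l.length = numNodesList l := by
  induction l with
  | nil => simp [numNodesList]
  | cons t ts ih =>
      cases t with
      | node cs =>
        simp only [List.map_cons, List.flatten_cons, numNodesList_append,
          List.length_cons, numNodesList, children, numNodes]
        omega

/-- Breadth-first list of the sibling groups of a tree, starting from the list
`gs` of sibling groups at the current level: the groups of the current level
followed by the groups of children on the levels below, level by level and
left to right within each level. -/
def bfsGroups (gs : List (List PTree)) : List (List PTree) :=
  if h : gs.flatten.isEmpty then []
  else gs ++ bfsGroups (gs.flatten.map children)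
termination_by numNodesList gs.flatten
decreasing_by
  have h1 := numNodesList_children_flatten gs.flatten
  have h2 : gs.flatten.length ≠ 0 := by
    intro hh
    rw [List.length_eq_zero_iff] at hh
    exact h (List.isEmpty_iff.mpr hh)
  omega

/-- Symbols of the ternary tunnel-digging code: ←, →, ⇒. -/
inductive TDSym : Type
  | leaf   -- ← : a leaf node
  | inner  -- → : a node with at least one child
  | tunnel -- ⇒ : transition between consecutive non-sibling nodes
deriving DecidableEq

/-- The symbols written for one sibling group: ← for each leaf, → for each
node with at least one child. -/
def groupSyms (g : List PTree) : List TDSym :=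
  g.map (fun t => if t.children.isEmpty then .leaf else .inner)

/-- Ternary tunnel-digging code TTD: the non-root nodes in breadth-first order
(by increasing depth, left to right within each depth), ← for each leaf and →
for each internal node, with ⇒ inserted between every two consecutive
non-sibling nodes. -/
def TTD (T : PTree) : List TDSym :=
  List.intercalate [TDSym.tunnel]
    (((bfsGroups [T.children]).filter (fun g => ¬ g.isEmpty)).map groupSyms)

/-- Binary encoding of the tunnel-digging symbols: ⇒ ↦ 0, → ↦ 00, ← ↦ 1. -/
def tdBits : TDSym → List Bool
  | .tunnel => [false]
  | .inner => [false, false]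
  | .leaf => [true]

/-- Binary tunnel-digging code TD. -/
def TD (T : PTree) : List Bool := (TTD T).flatMap tdBits

/-- TreeExplorer code TE: `0·PC(T)` if `l(T) < n(T)/2`, and `1·TD(T)` otherwise. -/
def TE (T : PTree) : List Bool :=
  if 2 * numLeaves T < numNodes T then false :: PC T else true :: TD T

end PTree

namespace PTree

lemma numLeavesList_append (a b : List PTree) :
    numLeavesList (a ++ b) = numLeavesList a + numLeavesList b := by
  induction a with
  | nil => simp [numLeavesList]
  | cons t ts ih => simp [numLeavesList, ih]; ring

mutual
lemma leaves_le_nodes : ∀ t : PTree, numLeaves t ≤ numNodes t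
  | node [] => le_refl _
  | node (t :: ts) => by
      have h1 := leaves_le_nodes t
      have h2 := leavesList_le_nodesList ts
      simp only [numLeaves, numNodes, numNodesList]
      omega
lemma leavesList_le_nodesList : ∀ l : List PTree, numLeavesList l ≤ numNodesList l
  | [] => le_refl _
  | t :: ts => by
      have h1 := leaves_le_nodes t
      have h2 := leavesList_le_nodesList ts
      simp only [numLeavesList, numNodesList]
      omega
end

lemma numLeaves_split (t : PTree) :
    numLeaves t = (if t.children.isEmpty then 1 else 0) + numLeavesList t.children := by
  cases t with
  | node ts =>
    cases ts with
    | nil => simp [numLeaves, numLeavesList, children]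
    | cons a as => simp [numLeaves, numLeavesList, children]

lemma numLeavesList_level (l : List PTree) :
    numLeavesList l =
      (l.filter (fun t => t.children.isEmpty)).length
        + numLeavesList ((l.map children).flatten) := by
  induction l with
  | nil => simp [numLeavesList]
  | cons t ts ih =>
      simp only [numLeavesList, List.map_cons, List.flatten_cons, numLeavesList_append,
        List.filter_cons]
      rw [numLeaves_split t]
      by_cases h : t.children.isEmpty <;> simp [h] <;> omega

lemma flatten_filter_nonempty (gs : List (List PTree)) :
    (gs.filter (fun g => !g.isEmpty)).flatten = gs.flatten := by
  induction gs with
  | nil => simp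
  | cons g gs ih =>
      by_cases h : g.isEmpty
      · have : g = [] := List.isEmpty_iff.mp h
        simp [this, List.filter_cons, ih]
      · simp [List.filter_cons, h, ih]

lemma filter_nonempty_of_flatten_nil (gs : List (List PTree)) (h : gs.flatten = []) :
    gs.filter (fun g => !g.isEmpty) = [] := by
  induction gs with
  | nil => rfl
  | cons g gs ih =>
      rw [List.flatten_cons, List.append_eq_nil_iff] at h
      rw [List.filter_cons, h.1]
      simpa using ih h.2

/-- number of elements listed by bfsGroups -/
lemma bfs_length (gs : List (List PTree)) :
    (bfsGroups gs).flatten.length = numNodesList gs.flatten := by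
  induction gs using bfsGroups.induct with
  | case1 gs h =>
      rw [bfsGroups, dif_pos h]
      have : gs.flatten = [] := List.isEmpty_iff.mp h
      simp [this, numNodesList]
  | case2 gs h ih =>
      rw [bfsGroups, dif_neg h]
      have hc := numNodesList_children_flatten gs.flatten
      simp only [List.flatten_append, List.length_append, ih]
      omega

/-- number of leaf elements listed by bfsGroups -/
lemma bfs_leaves (gs : List (List PTree)) :
    ((bfsGroups gs).flatten.filter (fun t => t.children.isEmpty)).length
      = numLeavesList gs.flatten := by
  induction gs using bfsGroups.induct with
  | case1 gs h =>
      rw [bfsGroups, dif_pos h]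
      have : gs.flatten = [] := List.isEmpty_iff.mp h
      simp [this, numLeavesList]
  | case2 gs h ih =>
      rw [bfsGroups, dif_neg h]
      have := numLeavesList_level gs.flatten
      simp only [List.flatten_append, List.filter_append, List.length_append, ih]
      omega

lemma level_groups (l : List PTree) :
    ((l.map children).filter (fun g => !g.isEmpty)).length
      + (l.filter (fun t => t.children.isEmpty)).length = l.length := by
  induction l with
  | nil => simp
  | cons t ts ih =>
      simp only [List.map_cons, List.filter_cons]
      by_cases h : t.children.isEmpty <;> simp [h] <;> omega

/-- number of nonempty groups listed by bfsGroups -/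
lemma bfs_groups (gs : List (List PTree)) :
    ((bfsGroups gs).filter (fun g => !g.isEmpty)).length + numLeavesList gs.flatten
      = (gs.filter (fun g => !g.isEmpty)).length + numNodesList gs.flatten := by
  induction gs using bfsGroups.induct with
  | case1 gs h =>
      rw [bfsGroups, dif_pos h]
      have h0 : gs.flatten = [] := List.isEmpty_iff.mp h
      rw [filter_nonempty_of_flatten_nil gs h0, h0]
      simp [numLeavesList, numNodesList]
  | case2 gs h ih =>
      rw [bfsGroups, dif_neg h]
      have h1 := numLeavesList_level gs.flatten
      have h2 := numNodesList_children_flatten gs.flatten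
      have h3 := level_groups gs.flatten
      simp only [List.filter_append, List.length_append]
      omega

lemma groupSyms_len (g : List PTree) :
    ((groupSyms g).flatMap tdBits).length
      + (g.filter (fun t => t.children.isEmpty)).length = 2 * g.length := by
  induction g with
  | nil => simp [groupSyms]
  | cons t ts ih =>
      have hcons : groupSyms (t :: ts)
          = (if t.children.isEmpty then TDSym.leaf else TDSym.inner) :: groupSyms ts := rfl
      rw [hcons, List.flatMap_cons, List.length_append, List.filter_cons]
      by_cases h : t.children.isEmpty = true
      · simp only [h, if_true, tdBits, List.length_cons, List.length_singleton,
          List.length_nil]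
        omega
      · simp only [h, if_false, Bool.false_eq_true, tdBits, List.length_cons,
          List.length_singleton, List.length_nil]
        omega

lemma intercalate_len : ∀ L : List (List PTree), L ≠ [] →
    ((List.intercalate [TDSym.tunnel] (L.map groupSyms)).flatMap tdBits).length + 1
      + (L.flatten.filter (fun t => t.children.isEmpty)).length
      = 2 * L.flatten.length + L.length
  | [], h => absurd rfl h
  | [g], _ => by
      have := groupSyms_len g
      simp only [List.map_cons, List.map_nil, List.intercalate, List.intersperse,
        List.flatten, List.flatten_cons, List.flatten_nil, List.append_nil,
        List.filter_append, List.length_append, List.length_cons, List.length_nil,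
        List.filter_nil, List.append_eq]
      omega
  | g :: g' :: L, _ => by
      have h1 := groupSyms_len g
      have h2 := intercalate_len (g' :: L) (by simp)
      have hstep : List.intercalate [TDSym.tunnel] ((g :: g' :: L).map groupSyms)
          = groupSyms g ++ [TDSym.tunnel] ++ List.intercalate [TDSym.tunnel] ((g' :: L).map groupSyms) := by
        simp [List.intercalate, List.intersperse]
      rw [hstep]
      simp only [List.flatMap_append, List.length_append, List.flatten_cons,
        List.filter_append, List.length_cons, tdBits, List.flatMap_cons,
        List.flatMap_nil, List.length_nil, List.length_singleton, List.append_nil] at *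
      omega

lemma TD_len (c : PTree) (cs : List PTree) :
    (TD (node (c :: cs))).length + 2 * numLeaves (node (c :: cs)) + 3
      = 3 * numNodes (node (c :: cs)) := by
  set T := node (c :: cs) with hT
  have hch : T.children = c :: cs := rfl
  have hl : numLeaves T = numLeavesList (c :: cs) := by simp [hT, numLeaves, numLeavesList]
  have hn : numNodes T = 1 + numNodesList (c :: cs) := by simp [hT, numNodes]
  have hflat : ([T.children] : List (List PTree)).flatten = c :: cs := by simp [hch]
  have hlen := bfs_length [T.children]
  have hlv := bfs_leaves [T.children]
  have hgp := bfs_groups [T.children]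
  rw [hflat] at hlen hlv hgp
  have hg0 : (([T.children] : List (List PTree))).filter (fun g => !g.isEmpty) = [T.children] := by
    simp [hch]
  rw [hg0] at hgp
  simp only [List.length_singleton] at hgp
  set L := (bfsGroups [T.children]).filter (fun g => !g.isEmpty) with hL
  have hLflat : L.flatten = (bfsGroups [T.children]).flatten := flatten_filter_nonempty _
  have hle := leavesList_le_nodesList (c :: cs)
  have hLne : L ≠ [] := by
    intro h
    rw [h] at hgp
    simp only [List.length_nil] at hgp
    omega
  have hint := intercalate_len L hLne
  rw [hLflat, hlen, hlv] at hint
  have hfiltereq : (fun (g : List PTree) => (decide ¬ (g.isEmpty = true)))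
      = (fun g => !g.isEmpty) := by
    funext g; cases g <;> simp
  have hTD : (TD T).length =
      ((List.intercalate [TDSym.tunnel] (L.map groupSyms)).flatMap tdBits).length := by
    simp only [TD, TTD, hL, hfiltereq]
  rw [hTD, hl, hn]
  omega

lemma TPC_len :
    ∀ T : PTree, ((TPC T).flatMap pcBits).length + 3 = numNodes T + 2 * numLeaves T := by
  refine TPC.induct _
    (fun ts => ts ≠ [] →
      ((TPCRest ts).flatMap pcBits).length + 1 = numNodesList ts + 2 * numLeavesList ts)
    ?_ ?_ ?_ ?_ ?_ ?_
  · simp [TPC, numNodes, numLeaves, numNodesList]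
  · intro t ih
    simp only [TPC, numNodes, numLeaves, numNodesList, numLeavesList,
      List.flatMap_append, List.length_append, pcBits, List.flatMap_cons,
      List.flatMap_nil, List.length_cons, List.length_nil]
    omega
  · intro t₁ t₂ ts ih1 ih2
    have h2 := ih2 (by simp)
    simp only [TPC, numNodes, numLeaves, numNodesList, numLeavesList,
      List.flatMap_append, List.length_append, pcBits, List.flatMap_cons,
      List.flatMap_nil, List.length_cons, List.length_nil, List.append_nil] at h2 ⊢
    omega
  · exact fun h => absurd rfl h
  · intro t ih _
    simp only [TPCRest, numNodesList, numLeavesList,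
      List.flatMap_append, List.length_append, pcBits, List.flatMap_cons,
      List.flatMap_nil, List.length_cons, List.length_nil, List.append_nil]
    omega
  · intro t ts hne ih1 ih2 _
    have h2 := ih2 (fun h => hne h)
    cases ts with
    | nil => exact absurd rfl (fun h => hne h)
    | cons a as =>
      simp only [TPCRest, numNodesList, numLeavesList,
        List.flatMap_append, List.length_append, pcBits, List.flatMap_cons,
        List.flatMap_nil, List.length_cons, List.length_nil, List.append_nil] at h2 ⊢
      omega

lemma TE_len (n : ℕ) (hn : 2 ≤ n) (T : PTree) (hT : numNodes T = n) :
    (TE T).length ≤ 2 * n - 2 := by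
  rw [TE]
  split
  · next h =>
      have := TPC_len T
      simp only [PC, List.length_cons]
      omega
  · next h =>
      have hle := leaves_le_nodes T
      obtain ⟨c, cs, hc⟩ : ∃ c cs, T = node (c :: cs) := by
        cases T with
        | node ts =>
          cases ts with
          | nil => exfalso; simp [numNodes, numNodesList] at hT; omega
          | cons a as => exact ⟨a, as, rfl⟩
      subst hc
      have := TD_len c cs
      simp only [List.length_cons]
      omega

end PTree
open PTree in
/-- **Average TreeExplorer code length.** Fix `n ≥ 2`. For any probability
distribution `p` supported on the (finite) set of rooted plane trees with `n`
nodes, the expected length of the TreeExplorer code is at most `2n - 2` bits. -/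
theorem treeExplorer_average_length (n : ℕ) (hn : 2 ≤ n)
    (s : Finset PTree) (hs : ∀ T ∈ s, numNodes T = n)
    (p : PTree → ℝ) (hp0 : ∀ T, 0 ≤ p T)
    (hsupp : ∀ T, p T ≠ 0 → T ∈ s)
    (hp1 : ∑ T ∈ s, p T = 1) :
    ∑ T ∈ s, p T * ((TE T).length : ℝ) ≤ 2 * n - 2 := by
  have key : ∀ T ∈ s, p T * ((TE T).length : ℝ) ≤ p T * (2 * n - 2) := by
    intro T hT
    apply mul_le_mul_of_nonneg_left _ (hp0 T)
    have h1 : (TE T).length ≤ 2 * n - 2 := TE_len n hn T (hs T hT)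
    have h2 : ((TE T).length : ℝ) ≤ ((2 * n - 2 : ℕ) : ℝ) := by exact_mod_cast h1
    calc ((TE T).length : ℝ) ≤ ((2 * n - 2 : ℕ) : ℝ) := h2
      _ = 2 * n - 2 := by
        rw [Nat.cast_sub (by omega)]
        push_cast
        ring
  calc ∑ T ∈ s, p T * ((TE T).length : ℝ)
      ≤ ∑ T ∈ s, p T * (2 * n - 2) := Finset.sum_le_sum key
    _ = 2 * n - 2 := by rw [← Finset.sum_mul, hp1, one_mul]
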